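/- arXiv:2001.08970 — 3 statements merged into one kernel-verified Lean document; each statement's English description precedes it below -/
import Mathlib

section
/- Fix positive constants m_1, …, m_N and v̄_1, …, v̄_N and set v_i := v̄_i/m_i. Let F : (0, ∞) → ℝ be twice continuously differentiable with F″(t) > 0 for all t > 0. Let ρ ∈ ℝ^N_+ and set n_i := ρ_i/m_i and n := Σ_{j=1}^N n_j. Then for every ξ ∈ ℝ^N with ξ ≠ 0 one has F″(v·ρ)·(v·ξ)² + Σ_{i=1}^N ξ_i²/(n_i·m_i²) − (1/n)·(Σ_{i=1}^N ξ_i/m_i)² > 0, where v·ρ = Σ_i v_i ρ_i and v·ξ = Σ_i v_i ξ_i. -/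
/-- Positivity of the Hessian quadratic form of the free energy
`h(ρ) = F(Σ_i v_i ρ_i) + Σ_i n_i ln(n_i/n)` (with `v_i = v̄_i/m_i`, `n_i = ρ_i/m_i`,
`n = Σ_j n_j`): if `F` is `C²` on `(0,∞)` with `F'' > 0`, then for every `ρ` in the open
positive orthant and every `ξ ≠ 0`,
`F''(v·ρ)(v·ξ)² + Σ_i ξ_i²/(n_i m_i²) − (1/n)(Σ_i ξ_i/m_i)² > 0`. -/
theorem hessian_quadratic_form_pos
    (N : ℕ) (hN : 1 ≤ N) (m vbar : Fin N → ℝ)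
    (hm : ∀ i, 0 < m i) (hv : ∀ i, 0 < vbar i)
    (F : ℝ → ℝ) (hF : ContDiffOn ℝ 2 F (Set.Ioi 0))
    (hF'' : ∀ t : ℝ, 0 < t → 0 < deriv (deriv F) t)
    (ρ : Fin N → ℝ) (hρ : ∀ i, 0 < ρ i)
    (ξ : Fin N → ℝ) (hξ : ξ ≠ 0) :
    0 < deriv (deriv F) (∑ i, (vbar i / m i) * ρ i) * (∑ i, (vbar i / m i) * ξ i) ^ 2
        + ∑ i, (ξ i) ^ 2 / ((ρ i / m i) * (m i) ^ 2)
        - (1 / ∑ j, ρ j / m j) * (∑ i, ξ i / m i) ^ 2 := by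
  have hNe : Nonempty (Fin N) := Fin.pos_iff_nonempty.mp hN
  set n : Fin N → ℝ := fun i => ρ i / m i with hn
  have hnpos : ∀ i, 0 < n i := fun i => div_pos (hρ i) (hm i)
  have hS : 0 < ∑ j, n j :=
    Finset.sum_pos (fun i _ => hnpos i) Finset.univ_nonempty
  set a : Fin N → ℝ := fun i => ξ i / (n i * m i) with ha
  have hξa : ∀ i, ξ i = n i * m i * a i := by
    intro i
    show ξ i = n i * m i * (ξ i / (n i * m i))
    field_simp [ha, ne_of_gt (hnpos i), ne_of_gt (hm i)]
  have h1 : ∀ i, ξ i / m i = n i * a i := by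
    intro i; rw [hξa i]; field_simp [ne_of_gt (hm i)]
  have h2 : ∀ i, (ξ i) ^ 2 / (n i * (m i) ^ 2) = n i * (a i) ^ 2 := by
    intro i; rw [hξa i]; field_simp [ne_of_gt (hnpos i), ne_of_gt (hm i)]
  have hvρ : ∀ i, (vbar i / m i) * ρ i = vbar i * n i := by
    intro i; rw [hn]; field_simp
  have hρpos : 0 < ∑ i, (vbar i / m i) * ρ i := by
    apply Finset.sum_pos (fun i _ => mul_pos (div_pos (hv i) (hm i)) (hρ i))
      Finset.univ_nonempty
  have hF2 : 0 < deriv (deriv F) (∑ i, (vbar i / m i) * ρ i) := hF'' _ hρpos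
  set S := ∑ j, n j with hSdef
  set A := ∑ i, n i * a i with hA
  set lam := A / S with hlam
  have key : ∑ i, n i * (a i - lam) ^ 2 = ∑ i, n i * (a i) ^ 2 - 1 / S * A ^ 2 := by
    have expand : ∀ i ∈ Finset.univ, n i * (a i - lam) ^ 2
        = n i * (a i) ^ 2 - 2 * lam * (n i * a i) + lam ^ 2 * n i := by
      intro i _; ring
    rw [Finset.sum_congr rfl expand, Finset.sum_add_distrib, Finset.sum_sub_distrib,
      ← Finset.mul_sum, ← Finset.mul_sum, ← hA, ← hSdef, hlam]
    field_simp
    ring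
  have hsum2 : ∑ i, (ξ i) ^ 2 / ((ρ i / m i) * (m i) ^ 2) = ∑ i, n i * (a i) ^ 2 := by
    exact Finset.sum_congr rfl fun i _ => h2 i
  have hsum1 : ∑ i, ξ i / m i = A := by
    rw [hA]; exact Finset.sum_congr rfl fun i _ => h1 i
  rw [hsum2, hsum1]
  have hvar_nonneg : 0 ≤ ∑ i, n i * (a i - lam) ^ 2 :=
    Finset.sum_nonneg fun i _ => mul_nonneg (hnpos i).le (sq_nonneg _)
  by_cases hc : ∀ i, a i = lam
  · -- equality case: ξ i = lam * n i * m i, lam ≠ 0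
    have hlam0 : lam ≠ 0 := by
      intro h0
      apply hξ
      funext i
      rw [Pi.zero_apply, hξa i, hc i, h0, mul_zero]
    have hvξ : ∑ i, (vbar i / m i) * ξ i = lam * ∑ i, vbar i * n i := by
      rw [Finset.mul_sum]
      refine Finset.sum_congr rfl fun i _ => ?_
      rw [hξa i, hc i]
      field_simp [ne_of_gt (hm i)]
    have hpos2 : 0 < ∑ i, vbar i * n i :=
      Finset.sum_pos (fun i _ => mul_pos (hv i) (hnpos i)) Finset.univ_nonempty
    have hsq : 0 < (∑ i, (vbar i / m i) * ξ i) ^ 2 := by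
      rw [hvξ]
      positivity
    have hzero : ∑ i, n i * (a i) ^ 2 - 1 / S * A ^ 2 = 0 := by
      rw [← key]
      apply Finset.sum_eq_zero
      intro i _
      rw [hc i]; ring
    nlinarith [mul_pos hF2 hsq]
  · push_neg at hc
    obtain ⟨i0, hi0⟩ := hc
    have hvar_pos : 0 < ∑ i, n i * (a i - lam) ^ 2 := by
      apply Finset.sum_pos' (fun i _ => mul_nonneg (hnpos i).le (sq_nonneg _))
      have hne : a i0 - lam ≠ 0 := sub_ne_zero.mpr hi0
      exact ⟨i0, Finset.mem_univ i0, mul_pos (hnpos i0) (by positivity)⟩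
    have : 0 < ∑ i, n i * (a i) ^ 2 - 1 / S * A ^ 2 := key ▸ hvar_pos
    nlinarith [mul_nonneg hF2.le (sq_nonneg (∑ i, (vbar i / m i) * ξ i))]
end

section
/- Fix positive constants m_1, …, m_N and v̄_1, …, v̄_N and set v_i := v̄_i/m_i. Let F : (0, ∞) → ℝ be twice continuously differentiable with F″(t) > 0 for all t > 0. Then the function h defined on the open positive orthant ℝ^N_+ by h(ρ) := F(Σ_{i=1}^N v_i ρ_i) + Σ_{i=1}^N n_i·ln(n_i/n), where n_i := ρ_i/m_i and n := Σ_j n_j, is strictly convex on ℝ^N_+. -/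
open Real in
lemma entropy_le {a₁ a₂ b₁ b₂ θ θ' : ℝ}
    (ha₁ : 0 < a₁) (ha₂ : 0 < a₂) (hb₁ : 0 < b₁) (hb₂ : 0 < b₂)
    (hθ : 0 < θ) (hθ' : 0 < θ') (hs : θ + θ' = 1) :
    (θ*a₁+θ'*a₂) * Real.log ((θ*a₁+θ'*a₂)/(θ*b₁+θ'*b₂))
      ≤ θ*(a₁*Real.log (a₁/b₁)) + θ'*(a₂*Real.log (a₂/b₂)) := by
  set u := a₁/b₁ with hu
  set v := a₂/b₂ with hv
  set b := θ*b₁+θ'*b₂ with hbdef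
  have hb : 0 < b := by positivity
  set p := θ*b₁/b with hp
  set q := θ'*b₂/b with hq
  have hp0 : 0 ≤ p := by positivity
  have hq0 : 0 ≤ q := by positivity
  have hpq : p + q = 1 := by
    rw [hp, hq, ← add_div, div_eq_one_iff_eq hb.ne']
  have hconv := Real.convexOn_mul_log.2 (le_of_lt (show (0:ℝ) < u by positivity))
    (le_of_lt (show (0:ℝ) < v by positivity)) hp0 hq0 hpq
  simp only [smul_eq_mul] at hconv
  have hmul := mul_le_mul_of_nonneg_left hconv hb.le
  have hA : p*u + q*v = (θ*a₁+θ'*a₂)/b := by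
    rw [hp, hq, hu, hv]
    field_simp
  have e1 : b * ((p*u+q*v) * Real.log (p*u+q*v))
      = (θ*a₁+θ'*a₂) * Real.log ((θ*a₁+θ'*a₂)/b) := by
    rw [hA]; field_simp
  have e2 : b * (p*(u*Real.log u) + q*(v*Real.log v))
      = θ*(a₁*Real.log u) + θ'*(a₂*Real.log v) := by
    rw [hp, hq, hu, hv]
    field_simp
  calc (θ*a₁+θ'*a₂) * Real.log ((θ*a₁+θ'*a₂)/b) = b * ((p*u+q*v) * Real.log (p*u+q*v)) := e1.symm
    _ ≤ b * (p*(u*Real.log u) + q*(v*Real.log v)) := hmul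
    _ = θ*(a₁*Real.log (a₁/b₁)) + θ'*(a₂*Real.log (a₂/b₂)) := e2

open Real in
lemma entropy_lt {a₁ a₂ b₁ b₂ θ θ' : ℝ}
    (ha₁ : 0 < a₁) (ha₂ : 0 < a₂) (hb₁ : 0 < b₁) (hb₂ : 0 < b₂)
    (hθ : 0 < θ) (hθ' : 0 < θ') (hs : θ + θ' = 1) (hne : a₁ * b₂ ≠ a₂ * b₁) :
    (θ*a₁+θ'*a₂) * Real.log ((θ*a₁+θ'*a₂)/(θ*b₁+θ'*b₂))
      < θ*(a₁*Real.log (a₁/b₁)) + θ'*(a₂*Real.log (a₂/b₂)) := by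
  set u := a₁/b₁ with hu
  set v := a₂/b₂ with hv
  have huv : u ≠ v := by
    rw [hu, hv]
    intro h
    exact hne ((div_eq_div_iff hb₁.ne' hb₂.ne').1 h)
  set b := θ*b₁+θ'*b₂ with hbdef
  have hb : 0 < b := by positivity
  set p := θ*b₁/b with hp
  set q := θ'*b₂/b with hq
  have hp0 : 0 < p := by positivity
  have hq0 : 0 < q := by positivity
  have hpq : p + q = 1 := by
    rw [hp, hq, ← add_div, div_eq_one_iff_eq hb.ne']
  have hconv := Real.strictConvexOn_mul_log.2 (le_of_lt (show (0:ℝ) < u by positivity))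
    (le_of_lt (show (0:ℝ) < v by positivity)) huv hp0 hq0 hpq
  simp only [smul_eq_mul] at hconv
  have hmul := (mul_lt_mul_iff_right₀ hb).2 hconv
  have hA : p*u + q*v = (θ*a₁+θ'*a₂)/b := by
    rw [hp, hq, hu, hv]
    field_simp
  have e1 : b * ((p*u+q*v) * Real.log (p*u+q*v))
      = (θ*a₁+θ'*a₂) * Real.log ((θ*a₁+θ'*a₂)/b) := by
    rw [hA]; field_simp
  have e2 : b * (p*(u*Real.log u) + q*(v*Real.log v))
      = θ*(a₁*Real.log u) + θ'*(a₂*Real.log v) := by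
    rw [hp, hq, hu, hv]
    field_simp
  calc (θ*a₁+θ'*a₂) * Real.log ((θ*a₁+θ'*a₂)/b) = b * ((p*u+q*v) * Real.log (p*u+q*v)) := e1.symm
    _ < b * (p*(u*Real.log u) + q*(v*Real.log v)) := hmul
    _ = θ*(a₁*Real.log (a₁/b₁)) + θ'*(a₂*Real.log (a₂/b₂)) := e2

/-- The free energy
`h(ρ) = F(Σ_i v_i ρ_i) + Σ_i n_i ln(n_i/n)` (with `v_i = v̄_i/m_i`, `n_i = ρ_i/m_i`,
`n = Σ_j n_j`), where `F` is `C²` on `(0,∞)` with `F'' > 0`, is strictly convex on the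
open positive orthant `ℝ^N_+`. -/
theorem mixture_freeEnergy_strictConvexOn
    (N : ℕ) (hN : 1 ≤ N) (m vbar : Fin N → ℝ)
    (hm : ∀ i, 0 < m i) (hv : ∀ i, 0 < vbar i)
    (F : ℝ → ℝ) (hF : ContDiffOn ℝ 2 F (Set.Ioi 0))
    (hF'' : ∀ t : ℝ, 0 < t → 0 < deriv (deriv F) t) :
    StrictConvexOn ℝ {ρ : Fin N → ℝ | ∀ i, 0 < ρ i}
      (fun ρ => F (∑ i, (vbar i / m i) * ρ i)
        + ∑ i, (ρ i / m i) * Real.log ((ρ i / m i) / (∑ j, ρ j / m j))) := by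
  have hNe : Nonempty (Fin N) := ⟨⟨0, by omega⟩⟩
  have hconvset : Convex ℝ {ρ : Fin N → ℝ | ∀ i, 0 < ρ i} := by
    have : {ρ : Fin N → ℝ | ∀ i, 0 < ρ i} = Set.univ.pi fun _ => Set.Ioi (0:ℝ) := by
      ext ρ; simp [Set.mem_pi]
    rw [this]
    exact convex_pi fun i _ => convex_Ioi 0
  have hFsc : StrictConvexOn ℝ (Set.Ioi 0) F := by
    refine strictConvexOn_of_deriv2_pos (convex_Ioi 0) hF.continuousOn (fun t ht => ?_)
    rw [interior_Ioi] at ht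
    simpa [Function.iterate_succ, Function.iterate_zero, Function.comp] using hF'' t ht
  refine ⟨hconvset, fun x hx y hy hxy a b ha hb hab => ?_⟩
  simp only [Set.mem_setOf_eq] at hx hy
  simp only [smul_eq_mul, Pi.add_apply, Pi.smul_apply, smul_eq_mul]
  set Lx := ∑ i, (vbar i / m i) * x i with hLx
  set Ly := ∑ i, (vbar i / m i) * y i with hLy
  set nx := ∑ j, x j / m j with hnx
  set ny := ∑ j, y j / m j with hny
  have hLxpos : 0 < Lx := Finset.sum_pos (fun i _ => by
    have := hm i; have := hv i; have := hx i; positivity) Finset.univ_nonempty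
  have hLypos : 0 < Ly := Finset.sum_pos (fun i _ => by
    have := hm i; have := hv i; have := hy i; positivity) Finset.univ_nonempty
  have hnxpos : 0 < nx := Finset.sum_pos (fun i _ => by
    have := hm i; have := hx i; positivity) Finset.univ_nonempty
  have hnypos : 0 < ny := Finset.sum_pos (fun i _ => by
    have := hm i; have := hy i; positivity) Finset.univ_nonempty
  -- linearity of L
  have hL : (∑ i, (vbar i / m i) * (a * x i + b * y i)) = a * Lx + b * Ly := by
    have h1 : ∀ i : Fin N, (vbar i / m i) * (a * x i + b * y i)
        = a * ((vbar i / m i) * x i) + b * ((vbar i / m i) * y i) := fun i => by ring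
    simp_rw [h1, Finset.sum_add_distrib, ← Finset.mul_sum]
    rfl
  -- linearity of n, per coordinate and total
  have hcoord : ∀ i : Fin N, (a * x i + b * y i) / m i
      = a * (x i / m i) + b * (y i / m i) := fun i => by ring
  have hn : (∑ j, (a * x j + b * y j) / m j) = a * nx + b * ny := by
    simp_rw [hcoord, Finset.sum_add_distrib, ← Finset.mul_sum]
    rfl
  -- entropy terms
  have hSle : ∀ i : Fin N,
      (a * (x i / m i) + b * (y i / m i)) *
        Real.log ((a * (x i / m i) + b * (y i / m i)) / (a * nx + b * ny))
      ≤ a * ((x i / m i) * Real.log ((x i / m i) / nx))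
        + b * ((y i / m i) * Real.log ((y i / m i) / ny)) := fun i =>
    entropy_le (by have := hm i; have := hx i; positivity)
      (by have := hm i; have := hy i; positivity) hnxpos hnypos ha hb hab
  set Sx := ∑ i, (x i / m i) * Real.log ((x i / m i) / nx) with hSx
  set Sy := ∑ i, (y i / m i) * Real.log ((y i / m i) / ny) with hSy
  have hSsum : (∑ i, (a * ((x i / m i) * Real.log ((x i / m i) / nx))
        + b * ((y i / m i) * Real.log ((y i / m i) / ny))))
      = a * Sx + b * Sy := by
    simp_rw [Finset.sum_add_distrib, ← Finset.mul_sum]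
    rfl
  rw [hL]
  have hgoal : F (a * Lx + b * Ly)
      + ∑ i, (a * (x i / m i) + b * (y i / m i)) *
          Real.log ((a * (x i / m i) + b * (y i / m i)) / (a * nx + b * ny))
      < a * (F Lx + Sx) + b * (F Ly + Sy) := by
    by_cases hLne : Lx = Ly
    · -- F term is an equality; strict inequality comes from the entropy
      have hexists : ∃ i, (x i / m i) * ny ≠ (y i / m i) * nx := by
        by_contra hcon
        push_neg at hcon
        have hxy' : x = y := by
          have hc : ∀ i, x i = (nx / ny) * y i := fun i => by
            have h := hcon i
            have hmi := (hm i).ne'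
            field_simp at h ⊢
            nlinarith [h]
          have hLc : Lx = (nx / ny) * Ly := by
            rw [hLx, hLy, Finset.mul_sum]
            exact Finset.sum_congr rfl fun i _ => by rw [hc i]; ring
          have hone : nx / ny = 1 := by
            have h1 : Ly = (nx / ny) * Ly := by rw [← hLc, hLne]
            have h2 : (1:ℝ) * Ly = (nx / ny) * Ly := by linarith
            exact (mul_right_cancel₀ hLypos.ne' h2).symm
          funext i
          rw [hc i, hone, one_mul]
        exact hxy hxy'
      obtain ⟨i₀, hi₀⟩ := hexists
      have hSlt : (∑ i, (a * (x i / m i) + b * (y i / m i)) *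
            Real.log ((a * (x i / m i) + b * (y i / m i)) / (a * nx + b * ny)))
          < a * Sx + b * Sy := by
        rw [← hSsum]
        refine Finset.sum_lt_sum (fun i _ => hSle i) ⟨i₀, Finset.mem_univ i₀, ?_⟩
        exact entropy_lt (by have := hm i₀; have := hx i₀; positivity)
          (by have := hm i₀; have := hy i₀; positivity) hnxpos hnypos ha hb hab hi₀
      have hFeq : F (a * Lx + b * Ly) = a * F Lx + b * F Ly := by
        rw [hLne, show a * Ly + b * Ly = Ly by rw [← add_mul, hab, one_mul]]
        rw [← add_mul, hab, one_mul]
      calc F (a * Lx + b * Ly) + _ < F (a * Lx + b * Ly) + (a * Sx + b * Sy) := by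
            exact add_lt_add_right hSlt _
        _ = a * (F Lx + Sx) + b * (F Ly + Sy) := by rw [hFeq]; ring
    · -- F term is strictly convex
      have hFlt : F (a * Lx + b * Ly) < a * F Lx + b * F Ly := by
        have := hFsc.2 (Set.mem_Ioi.2 hLxpos) (Set.mem_Ioi.2 hLypos) hLne ha hb hab
        simpa using this
      have hSle' : (∑ i, (a * (x i / m i) + b * (y i / m i)) *
            Real.log ((a * (x i / m i) + b * (y i / m i)) / (a * nx + b * ny)))
          ≤ a * Sx + b * Sy := by
        rw [← hSsum]
        exact Finset.sum_le_sum fun i _ => hSle i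
      calc F (a * Lx + b * Ly) + _
          < (a * F Lx + b * F Ly) + (a * Sx + b * Sy) := add_lt_add_of_lt_of_le hFlt hSle'
        _ = a * (F Lx + Sx) + b * (F Ly + Sy) := by ring
  -- rewrite the goal's entropy argument using hcoord and hn, then apply hgoal
  have hrw : (∑ i, ((a * x i + b * y i) / m i) *
        Real.log (((a * x i + b * y i) / m i) / (∑ j, (a * x j + b * y j) / m j)))
      = ∑ i, (a * (x i / m i) + b * (y i / m i)) *
          Real.log ((a * (x i / m i) + b * (y i / m i)) / (a * nx + b * ny)) := by
    refine Finset.sum_congr rfl fun i _ => by rw [hcoord i, hn]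
  rw [hrw]
  exact hgoal
end

section
/- Fix positive constants m_1, …, m_N and v̄_1, …, v̄_N and set v_i := v̄_i/m_i. Let F : (0, ∞) → ℝ be twice continuously differentiable with F″(t) > 0 for all t > 0 and F′(t) → −∞ as t → 0⁺. Define h on ℝ^N_+ by h(ρ) := F(Σ_i v_i ρ_i) + Σ_i n_i·ln(n_i/n) with n_i := ρ_i/m_i, n := Σ_j n_j; its partial derivatives are ∂h/∂ρ_i(ρ) = F′(v·ρ)·v_i + (1/m_i)·ln(n_i/n). Then for every sequence (ρ^k) in ℝ^N_+ converging to a point ρ̄ of the boundary of ℝ^N_+ (i.e. ρ̄_i ≥ 0 for all i and ρ̄_j = 0 for at least one j), the Euclidean norm of the gradient satisfies |∇h(ρ^k)| → +∞ as k → ∞. -/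
open Filter


theorem mix_aux (N : ℕ) (m v : Fin N → ℝ) (hm : ∀ i, 0 < m i) (hvpos : ∀ i, 0 < v i)
    (F' : ℝ → ℝ) (hF'cont : ContinuousOn F' (Set.Ioi 0))
    (hF'bot : Tendsto F' (nhdsWithin 0 (Set.Ioi 0)) atBot)
    (ρbar : Fin N → ℝ) (hρ0 : ∀ i, 0 ≤ ρbar i) (j : Fin N) (hj : ρbar j = 0)
    (ρk : ℕ → Fin N → ℝ) (hpos : ∀ k i, 0 < ρk k i)
    (hconv : Tendsto ρk atTop (nhds ρbar)) :
    Tendsto (fun k => Real.sqrt (∑ i,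
      (F' (∑ j, v j * ρk k j) * v i
        + (1 / m i) * Real.log ((ρk k i / m i) / (∑ j, ρk k j / m j))) ^ 2)) atTop atTop := by
  have hne : (Finset.univ : Finset (Fin N)).Nonempty := ⟨j, Finset.mem_univ j⟩
  set s : ℕ → ℝ := fun k => ∑ j, v j * ρk k j with hs_def
  set n : ℕ → ℝ := fun k => ∑ j, ρk k j / m j with hn_def
  set g : ℕ → Fin N → ℝ := fun k i =>
    F' (s k) * v i + (1 / m i) * Real.log ((ρk k i / m i) / (n k)) with hg_def
  have hcomp : ∀ i, Tendsto (fun k => ρk k i) atTop (nhds (ρbar i)) :=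
    fun i => tendsto_pi_nhds.1 hconv i
  have hspos : ∀ k, 0 < s k := fun k =>
    Finset.sum_pos (fun i _ => mul_pos (hvpos i) (hpos k i)) hne
  have hnpos : ∀ k, 0 < n k := fun k =>
    Finset.sum_pos (fun i _ => div_pos (hpos k i) (hm i)) hne
  have hni_pos : ∀ k i, 0 < ρk k i / m i := fun k i => div_pos (hpos k i) (hm i)
  have hratio_pos : ∀ k i, 0 < (ρk k i / m i) / n k := fun k i =>
    div_pos (hni_pos k i) (hnpos k)
  have hstend : Tendsto s atTop (nhds (∑ i, v i * ρbar i)) := by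
    apply tendsto_finset_sum
    intro i _
    exact (hcomp i).const_mul (v i)
  have hntend : Tendsto n atTop (nhds (∑ i, ρbar i / m i)) := by
    apply tendsto_finset_sum
    intro i _
    exact (hcomp i).div_const (m i)
  -- general bound
  have hb : ∀ k i, |g k i| ≤ Real.sqrt (∑ i, (g k i) ^ 2) := by
    intro k i
    rw [← Real.sqrt_sq_eq_abs]
    apply Real.sqrt_le_sqrt
    exact Finset.single_le_sum (f := fun i => (g k i) ^ 2)
      (fun i _ => sq_nonneg _) (Finset.mem_univ i)
  by_cases hall : ∀ i, ρbar i = 0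
  · -- whole limit is zero
    have hs0 : Tendsto s atTop (nhds 0) := by
      convert hstend using 2
      simp [hall]
    have hs0' : Tendsto s atTop (nhdsWithin 0 (Set.Ioi 0)) :=
      tendsto_nhdsWithin_iff.2 ⟨hs0, Eventually.of_forall (fun k => hspos k)⟩
    have hF's : Tendsto (fun k => F' (s k)) atTop atBot := hF'bot.comp hs0'
    set C : ℝ := ∑ i, m i * v i with hC
    have hCpos : 0 < C := Finset.sum_pos (fun i _ => mul_pos (hm i) (hvpos i)) hne
    set M : ℝ := ∑ i, m i with hM
    have hMpos : 0 < M := Finset.sum_pos (fun i _ => hm i) hne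
    have hT : ∀ k, ∑ i, m i * g k i ≤ F' (s k) * C := by
      intro k
      have h1 : ∑ i, m i * g k i
          = F' (s k) * C + ∑ i, Real.log ((ρk k i / m i) / n k) := by
        rw [Finset.mul_sum, ← Finset.sum_add_distrib]
        apply Finset.sum_congr rfl
        intro i _
        have : m i ≠ 0 := (hm i).ne'
        simp only [hg_def]; rw [mul_add, ← mul_assoc (m i) (1 / m i), mul_one_div_cancel this, one_mul]
        ring
      rw [h1]
      have h2 : ∑ i, Real.log ((ρk k i / m i) / n k) ≤ 0 := by
        apply Finset.sum_nonpos
        intro i _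
        apply Real.log_nonpos (le_of_lt (hratio_pos k i))
        rw [div_le_one (hnpos k)]
        exact Finset.single_le_sum (f := fun i => ρk k i / m i)
          (fun i _ => (hni_pos k i).le) (Finset.mem_univ i)
      linarith
    have hTtend : Tendsto (fun k => ∑ i, m i * g k i) atTop atBot :=
      tendsto_atBot_mono hT (hF's.atBot_mul_const hCpos)
    have habs : Tendsto (fun k => |∑ i, m i * g k i| / M) atTop atTop :=
      (tendsto_abs_atBot_atTop.comp hTtend).atTop_div_const hMpos
    apply tendsto_atTop_mono _ habs
    intro k
    rw [div_le_iff₀ hMpos]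
    calc |∑ i, m i * g k i| ≤ ∑ i, |m i * g k i| := Finset.abs_sum_le_sum_abs _ _
      _ ≤ ∑ i, m i * Real.sqrt (∑ i, (g k i) ^ 2) := by
          apply Finset.sum_le_sum
          intro i _
          rw [abs_mul, abs_of_pos (hm i)]
          exact mul_le_mul_of_nonneg_left (hb k i) (hm i).le
      _ = Real.sqrt (∑ i, (g k i) ^ 2) * M := by
          rw [← Finset.sum_mul, mul_comm]
  · push_neg at hall
    obtain ⟨i0, hi0⟩ := hall
    have hi0pos : 0 < ρbar i0 := lt_of_le_of_ne (hρ0 i0) (Ne.symm hi0)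
    have hsbar : 0 < ∑ i, v i * ρbar i :=
      Finset.sum_pos' (fun i _ => mul_nonneg (hvpos i).le (hρ0 i))
        ⟨i0, Finset.mem_univ i0, mul_pos (hvpos i0) hi0pos⟩
    have hnbar : 0 < ∑ i, ρbar i / m i :=
      Finset.sum_pos' (fun i _ => div_nonneg (hρ0 i) (hm i).le)
        ⟨i0, Finset.mem_univ i0, div_pos hi0pos (hm i0)⟩
    have hF'tend : Tendsto (fun k => F' (s k)) atTop (nhds (F' (∑ i, v i * ρbar i))) := by
      have := (hF'cont.continuousAt (Ioi_mem_nhds hsbar)).tendsto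
      exact this.comp hstend
    -- ratio for j tends to 0 from the right
    have hr : Tendsto (fun k => (ρk k j / m j) / n k) atTop (nhds 0) := by
      have h1 : Tendsto (fun k => ρk k j / m j) atTop (nhds 0) := by
        have := (hcomp j).div_const (m j)
        rwa [hj, zero_div] at this
      have := h1.div hntend hnbar.ne'
      rwa [zero_div] at this
    have hr' : Tendsto (fun k => (ρk k j / m j) / n k) atTop (nhdsWithin 0 (Set.Ioi 0)) :=
      tendsto_nhdsWithin_iff.2 ⟨hr, Eventually.of_forall (fun k => hratio_pos k j)⟩
    have hlog : Tendsto (fun k => Real.log ((ρk k j / m j) / n k)) atTop atBot :=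
      Real.tendsto_log_nhdsGT_zero.comp hr'
    have hgj : Tendsto (fun k => g k j) atTop atBot := by
      apply Tendsto.add_atBot (hF'tend.mul_const (v j))
      exact hlog.const_mul_atBot (one_div_pos.2 (hm j))
    apply tendsto_atTop_mono (fun k => hb k j) (tendsto_abs_atBot_atTop.comp hgj)


/-- For the free energy
`h(ρ) = F(Σ_i v_i ρ_i) + Σ_i n_i ln(n_i/n)` with `F` of class `C²` on `(0,∞)`, `F'' > 0`
and `F'(t) → −∞` as `t → 0⁺`, whose partial derivatives are
`∂h/∂ρ_i(ρ) = F'(v·ρ)·v_i + (1/m_i) ln(n_i/n)`, the Euclidean norm of the gradient blows up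
along every sequence of interior points converging to a boundary point of `ℝ^N_+`. -/
theorem mixture_freeEnergy_gradient_blowup
    (N : ℕ) (hN : 1 ≤ N) (m vbar : Fin N → ℝ)
    (hm : ∀ i, 0 < m i) (hv : ∀ i, 0 < vbar i)
    (F : ℝ → ℝ) (hF : ContDiffOn ℝ 2 F (Set.Ioi 0))
    (hF'' : ∀ t : ℝ, 0 < t → 0 < deriv (deriv F) t)
    (hF' : Tendsto (deriv F) (nhdsWithin 0 (Set.Ioi 0)) atBot) :
    ∀ ρbar : Fin N → ℝ, (∀ i, 0 ≤ ρbar i) → (∃ j, ρbar j = 0) →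
      ∀ ρk : ℕ → Fin N → ℝ, (∀ k i, 0 < ρk k i) →
        Tendsto ρk atTop (nhds ρbar) →
        Tendsto (fun k =>
            Real.sqrt (∑ i,
              (deriv F (∑ j, (vbar j / m j) * ρk k j) * (vbar i / m i)
                + (1 / m i) * Real.log ((ρk k i / m i) / (∑ j, ρk k j / m j))) ^ 2))
          atTop atTop := by
  intro ρbar hρ0 hex ρk hpos hconv
  obtain ⟨j, hj⟩ := hex
  have hcont : ContinuousOn (deriv F) (Set.Ioi 0) :=
    hF.continuousOn_deriv_of_isOpen isOpen_Ioi one_le_two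
  exact mix_aux N m (fun i => vbar i / m i) hm
    (fun i => div_pos (hv i) (hm i)) (deriv F) hcont hF' ρbar hρ0 j hj ρk hpos hconv
end
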